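/- Let X, Y be complete separable metric spaces with Borel probability measures μ_X, μ_Y, and let μ̃ be a coupling of μ_X and μ_Y such that μ̃⊗μ̃{((x,y),(x',y')) : |r_X(x,x') − r_Y(y,y')| > 2δ} < δ⁴ for some δ ∈ (0,1/2). Suppose x₀ ∈ X satisfies μ_X(B_ε(x₀)) > δ. Then there exists y₀ ∈ Y with μ̃(B_ε(x₀) × B_{2(ε+δ)}(y₀)) ≥ (1 − δ²) μ_X(B_ε(x₀)). -/

import Mathlib

open Metric Set MeasureTheory ENNReal

/-- If a coupling `μ̃` of `μ_X` and `μ_Y` satisfies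
`μ̃⊗μ̃ {((x,y),(x',y')) : |r_X(x,x') − r_Y(y,y')| > 2δ} < δ⁴` for some `δ ∈ (0, 1/2)`,
and `x₀` satisfies `μ_X(B_ε(x₀)) > δ`, then there is `y₀ ∈ Y` with
`μ̃(B_ε(x₀) × B_{2(ε+δ)}(y₀)) ≥ (1 − δ²) μ_X(B_ε(x₀))`. -/
theorem exists_matching_center {X Y : Type*} [MetricSpace X] [MetricSpace Y]
    [CompleteSpace X] [TopologicalSpace.SeparableSpace X]
    [CompleteSpace Y] [TopologicalSpace.SeparableSpace Y]
    [MeasurableSpace X] [BorelSpace X] [MeasurableSpace Y] [BorelSpace Y]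
    (μX : Measure X) (μY : Measure Y)
    [IsProbabilityMeasure μX] [IsProbabilityMeasure μY]
    (μt : Measure (X × Y)) [IsProbabilityMeasure μt]
    (h1 : μt.map Prod.fst = μX) (h2 : μt.map Prod.snd = μY)
    (δ : ℝ) (hδ : δ ∈ Set.Ioo (0 : ℝ) (1 / 2))
    (hcpl : (μt.prod μt) {q : (X × Y) × (X × Y) |
        2 * δ < |dist q.1.1 q.2.1 - dist q.1.2 q.2.2|} < ENNReal.ofReal (δ ^ 4))
    (ε : ℝ) (x₀ : X) (hx₀ : ENNReal.ofReal δ < μX (Metric.ball x₀ ε)) :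
    ∃ y₀ : Y, (1 - ENNReal.ofReal (δ ^ 2)) * μX (Metric.ball x₀ ε)
        ≤ μt (Metric.ball x₀ ε ×ˢ Metric.ball y₀ (2 * (ε + δ))) := by
  by_contra h
  push_neg at h
  obtain ⟨hδ0, hδhalf⟩ := hδ
  set B := Metric.ball x₀ ε with hB
  set R := 2 * (ε + δ) with hR
  set m := μX (Metric.ball x₀ ε) with hm
  have hBm : MeasurableSet B := measurableSet_ball
  have hmB : μt (B ×ˢ (univ : Set Y)) = m := by
    rw [hm, ← h1, Measure.map_apply measurable_fst measurableSet_ball]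
    congr 1
    ext p
    simp [hB]
  have hmfin : m ≠ ∞ := (measure_lt_top μX _).ne
  have ha1 : ENNReal.ofReal (δ ^ 2) ≤ 1 := by
    rw [← ENNReal.ofReal_one]
    apply ENNReal.ofReal_le_ofReal
    nlinarith
  -- for each y, the "far" part has measure at least δ² m
  have hsec : ∀ y : Y, ENNReal.ofReal (δ ^ 2) * m ≤ μt (B ×ˢ (Metric.ball y R)ᶜ) := by
    intro y
    have hsum : μt (B ×ˢ Metric.ball y R) + μt (B ×ˢ (Metric.ball y R)ᶜ) = m := by
      rw [← measure_union (Disjoint.set_prod_right disjoint_compl_right _ _)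
        (hBm.prod measurableSet_ball.compl), ← Set.prod_union, Set.union_compl_self, hmB]
    have hball := (h y).le
    have hballfin : μt (B ×ˢ Metric.ball y R) ≠ ∞ := (measure_lt_top μt _).ne
    have hkey : ENNReal.ofReal (δ ^ 2) * m + μt (B ×ˢ Metric.ball y R)
        ≤ μt (B ×ˢ (Metric.ball y R)ᶜ) + μt (B ×ˢ Metric.ball y R) := by
      calc ENNReal.ofReal (δ ^ 2) * m + μt (B ×ˢ Metric.ball y R)
          ≤ ENNReal.ofReal (δ ^ 2) * m + (1 - ENNReal.ofReal (δ ^ 2)) * m :=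
            add_le_add le_rfl hball
        _ = (ENNReal.ofReal (δ ^ 2) + (1 - ENNReal.ofReal (δ ^ 2))) * m := (add_mul _ _ _).symm
        _ = m := by rw [add_tsub_cancel_of_le ha1, one_mul]
        _ = μt (B ×ˢ (Metric.ball y R)ᶜ) + μt (B ×ˢ Metric.ball y R) := by
            rw [add_comm] at hsum; exact hsum.symm
    exact (ENNReal.add_le_add_iff_right hballfin).mp hkey
  -- the bad set
  set S : Set ((X × Y) × (X × Y)) :=
    {q | q.1.1 ∈ B ∧ q.2.1 ∈ B ∧ R ≤ dist q.1.2 q.2.2} with hS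
  have hSm : MeasurableSet S := by
    apply MeasurableSet.inter (measurable_fst.fst (hBm))
    apply MeasurableSet.inter (measurable_fst.comp measurable_snd hBm)
    exact measurableSet_le measurable_const
      ((continuous_dist.comp (continuous_fst.snd.prodMk continuous_snd.snd)).measurable)
  have hsub : S ⊆ {q : (X × Y) × (X × Y) |
      2 * δ < |dist q.1.1 q.2.1 - dist q.1.2 q.2.2|} := by
    rintro ⟨⟨x, y⟩, ⟨x', y'⟩⟩ ⟨hx, hx', hd⟩
    simp only [mem_setOf_eq]
    have hd' : 2 * (ε + δ) ≤ dist y y' := hd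
    have h1 : dist x x' < 2 * ε := by
      calc dist x x' ≤ dist x x₀ + dist x₀ x' := dist_triangle _ _ _
        _ < ε + ε := add_lt_add (mem_ball.mp hx) (by rw [dist_comm]; exact mem_ball.mp hx')
        _ = 2 * ε := by ring
    have h2 : 2 * δ < dist y y' - dist x x' := by linarith
    calc 2 * δ < dist y y' - dist x x' := h2
      _ = -(dist x x' - dist y y') := by ring
      _ ≤ |dist x x' - dist y y'| := neg_le_abs _
  -- lower bound on the product measure of S
  have key : ENNReal.ofReal (δ ^ 2) * m * m ≤ (μt.prod μt) S := by
    rw [Measure.prod_apply hSm]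
    calc ENNReal.ofReal (δ ^ 2) * m * m
        = ENNReal.ofReal (δ ^ 2) * m * μt (B ×ˢ (univ : Set Y)) := by rw [hmB]
      _ = ∫⁻ _ in B ×ˢ (univ : Set Y), ENNReal.ofReal (δ ^ 2) * m ∂μt := by
          rw [setLIntegral_const]
      _ ≤ ∫⁻ p in B ×ˢ (univ : Set Y), μt (Prod.mk p ⁻¹' S) ∂μt := by
          apply setLIntegral_mono (measurable_measure_prodMk_left hSm) ?_
          · intro p hp
            refine (hsec p.2).trans (measure_mono ?_)
            rintro ⟨x', y'⟩ ⟨hx', hy'⟩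
            exact ⟨hp.1, hx', not_lt.mp (fun hlt => hy' (mem_ball'.mpr hlt))⟩
      _ ≤ ∫⁻ p, μt (Prod.mk p ⁻¹' S) ∂μt := setLIntegral_le_lintegral _ _
  have hlt4 : ENNReal.ofReal (δ ^ 4) < ENNReal.ofReal (δ ^ 2) * m * m := by
    have : ENNReal.ofReal (δ ^ 4) = ENNReal.ofReal (δ ^ 2) * ENNReal.ofReal δ * ENNReal.ofReal δ := by
      rw [← ENNReal.ofReal_mul (by positivity), ← ENNReal.ofReal_mul (by positivity)]
      ring_nf
    rw [this]
    have h2 : ENNReal.ofReal (δ ^ 2) ≠ 0 := by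
      simp [ENNReal.ofReal_eq_zero]; positivity
    have hmm : ENNReal.ofReal δ * ENNReal.ofReal δ < m * m :=
      ENNReal.mul_lt_mul hx₀ hx₀
    calc ENNReal.ofReal (δ ^ 2) * ENNReal.ofReal δ * ENNReal.ofReal δ
        = ENNReal.ofReal (δ ^ 2) * (ENNReal.ofReal δ * ENNReal.ofReal δ) := by ring
      _ < ENNReal.ofReal (δ ^ 2) * (m * m) :=
          (ENNReal.mul_lt_mul_iff_right h2 ENNReal.ofReal_ne_top).mpr hmm
      _ = ENNReal.ofReal (δ ^ 2) * m * m := by ring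
  exact absurd (hlt4.trans_le (key.trans (measure_mono hsub))) (not_lt.mpr hcpl.le)
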